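/- For every integer n and every integer w ≥ 2, there exists exactly one width-w nonadjacent form of n, i.e., a radix-2 representation (ε_L … ε_0) with digits in D_w = {0, ±1, ±3, …, ±(2^{w-1}-1)} (zero together with the odd integers of absolute value less than 2^{w-1}), n = Σ_{i=0}^{L} ε_i 2^i, and the property that ε_i ≠ 0 implies ε_{i+1} = … = ε_{i+w-1} = 0 (up to leading zeros). -/

import Mathlib

/-- The value of a digit string (least significant digit first) in base 2. -/
def digitValue (l : List ℤ) : ℤ :=
  ∑ i ∈ Finset.range l.length, l.getD i 0 * 2 ^ i

/-- `l` is a width-`w` nonadjacent form: all digits are zero or odd with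
absolute value less than `2^(w-1)`, and any nonzero digit is followed by
`w-1` zero digits. -/
def IsWNAF (w : ℕ) (l : List ℤ) : Prop :=
  (∀ d ∈ l, d = 0 ∨ (Odd d ∧ |d| < 2 ^ (w - 1))) ∧
  ∀ i j : ℕ, l.getD i 0 ≠ 0 → 1 ≤ j → j ≤ w - 1 → l.getD (i + j) 0 = 0

lemma digitValue_nil : digitValue [] = 0 := by simp [digitValue]

lemma digitValue_cons (d : ℤ) (t : List ℤ) :
    digitValue (d :: t) = d + 2 * digitValue t := by
  simp only [digitValue, List.length_cons]
  rw [Finset.sum_range_succ']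
  simp only [List.getD_cons_succ, List.getD_cons_zero, pow_zero, mul_one, pow_succ]
  have h : ∀ i : ℕ, t.getD i 0 * (2 ^ i * 2) = 2 * (t.getD i 0 * 2 ^ i) := fun i => by ring
  simp_rw [h, ← Finset.mul_sum]
  ring

lemma pow_dvd_digitValue : ∀ (k : ℕ) (l : List ℤ), (∀ i < k, l.getD i 0 = 0) →
    (2:ℤ) ^ k ∣ digitValue l
  | 0, l, _ => by simp
  | k+1, [], _ => by simp [digitValue_nil]
  | k+1, d :: t, h => by
    have hd : d = 0 := h 0 (Nat.succ_pos k)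
    have ht : ∀ i < k, t.getD i 0 = 0 := fun i hi => h (i+1) (by omega)
    obtain ⟨c, hc⟩ := pow_dvd_digitValue k t ht
    exact ⟨c, by rw [digitValue_cons, hd, hc]; ring⟩

lemma IsWNAF.tail {w : ℕ} {d : ℤ} {t : List ℤ} (h : IsWNAF w (d :: t)) : IsWNAF w t := by
  obtain ⟨h1, h2⟩ := h
  refine ⟨fun x hx => h1 x (List.mem_cons_of_mem _ hx), fun i j hne h1j hj => ?_⟩
  have := h2 (i+1) j (by simpa using hne) h1j hj
  simpa [show i+1+j = (i+j)+1 by omega] using this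

lemma IsWNAF.cons {w : ℕ} (hw : 2 ≤ w) {d : ℤ} {t : List ℤ} (ht : IsWNAF w t)
    (hd : d = 0 ∨ (Odd d ∧ |d| < 2 ^ (w-1) ∧ ∀ i < w - 1, t.getD i 0 = 0)) :
    IsWNAF w (d :: t) := by
  constructor
  · intro x hx
    rcases List.mem_cons.1 hx with rfl | hx
    · rcases hd with h | h
      · exact Or.inl h
      · exact Or.inr ⟨h.1, h.2.1⟩
    · exact ht.1 x hx
  · intro i j hne h1j hj
    cases i with
    | zero =>
      rcases hd with rfl | h
      · simp at hne
      · rw [show 0 + j = (j-1)+1 by omega, List.getD_cons_succ]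
        exact h.2.2 _ (by omega)
    | succ i =>
      rw [show i+1+j = (i+j)+1 by omega, List.getD_cons_succ]
      exact ht.2 i j (by simpa using hne) h1j hj

lemma bmod_spec (w : ℕ) (hw : 2 ≤ w) (n : ℤ) (hn : ¬ (2:ℤ) ∣ n) :
    Odd (n.bmod (2^w)) ∧ |n.bmod (2^w)| < 2 ^ (w-1) ∧ (2:ℤ)^w ∣ n - n.bmod (2^w) := by
  have h1 : (2:ℤ)^w = 2 * 2^(w-1) := by
    conv_lhs => rw [show w = (w-1)+1 by omega]
    ring
  have h2 : (2:ℤ)^(w-1) = 2 * 2^(w-2) := by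
    conv_lhs => rw [show w-1 = (w-2)+1 by omega]
    ring
  have hC : (0:ℤ) < 2^(w-2) := by positivity
  have hmpos : (0:ℤ) < 2^w := by positivity
  have hr0 : 0 ≤ n % (2:ℤ)^w := Int.emod_nonneg n (by positivity)
  have hr1 : n % (2:ℤ)^w < 2^w := Int.emod_lt_of_pos n hmpos
  have hpar : n % (2:ℤ)^w % 2 = n % 2 := Int.emod_emod_of_dvd n ⟨2^(w-1), h1⟩
  have hdvd : (2:ℤ)^w ∣ n - n % (2:ℤ)^w :=
    ⟨n / 2^w, by linarith [Int.emod_add_mul_ediv n (2^w)]⟩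
  have hcast : ((2^w : ℕ) : ℤ) = 2^w := by push_cast; ring
  have hhalf : ((2:ℤ)^w + 1) / 2 = 2^(w-1) := by omega
  have hb : n.bmod (2^w) = if n % (2:ℤ)^w < 2^(w-1) then n % (2:ℤ)^w else n % (2:ℤ)^w - 2^w := by
    rw [Int.bmod_def, hcast, hhalf]
  have hn2 : n % 2 = 1 := by omega
  refine ⟨?_, ?_, ?_⟩
  · rw [Int.odd_iff, hb]
    split <;> omega
  · rw [abs_lt, hb]
    constructor <;> (split <;> omega)
  · rw [hb]
    split
    · exact hdvd
    · have : n - (n % (2:ℤ)^w - 2^w) = (n - n % (2:ℤ)^w) + 2^w := by ring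
      rw [this]
      exact dvd_add hdvd ⟨1, by ring⟩

lemma half_lt {n : ℤ} (h0 : n ≠ 0) (h2 : (2:ℤ) ∣ n) : (n/2).natAbs < n.natAbs := by
  obtain ⟨k, rfl⟩ := h2
  rw [Int.mul_ediv_cancel_left _ two_ne_zero]
  have hm : (2 * k).natAbs = 2 * k.natAbs := by rw [Int.natAbs_mul]; rfl
  have hk : k.natAbs ≠ 0 := Int.natAbs_ne_zero.mpr (by rintro rfl; simp at h0)
  omega

lemma odd_lt (w : ℕ) (hw : 2 ≤ w) {n : ℤ} (h2 : ¬ (2:ℤ) ∣ n) :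
    ((n - n.bmod (2^w)) / 2).natAbs < n.natAbs := by
  obtain ⟨hodd, habs, hdvd⟩ := bmod_spec w hw n h2
  set d := n.bmod (2^w) with hd
  have hpw : (2:ℤ)^w = 2 * 2^(w-1) := by
    conv_lhs => rw [show w = (w-1)+1 by omega]
    ring
  have h2d : (2:ℤ) ∣ n - d := dvd_trans ⟨2^(w-1), hpw⟩ hdvd
  obtain ⟨k, hk⟩ := h2d
  rw [hk, Int.mul_ediv_cancel_left _ two_ne_zero]
  have hn0 : n ≠ 0 := by rintro rfl; exact h2 ⟨0, by ring⟩
  have habs' : |d| < 2^(w-1) := habs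
  by_cases hcase : |n| ≤ |d|
  · -- then |n - d| < 2^w, so n = d, k = 0
    have hzero : n - d = 0 := Int.eq_zero_of_abs_lt_dvd hdvd (by
      calc |n - d| ≤ |n| + |d| := by
            rw [sub_eq_add_neg]
            simpa using abs_add_le n (-d)
        _ < 2^w := by omega)
    have : k = 0 := by omega
    subst this
    simpa using Int.natAbs_pos.mpr hn0
  · push_neg at hcase
    have htri : |n - d| ≤ |n| + |d| := by
      rw [sub_eq_add_neg]
      simpa using abs_add_le n (-d)
    have h2k : |2 * k| = |n - d| := by rw [hk]
    have : 2 * |k| < 2 * |n| := by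
      rw [abs_mul] at h2k
      simp at h2k
      omega
    have hkn : |k| < |n| := by omega
    rw [Int.abs_eq_natAbs, Int.abs_eq_natAbs] at hkn
    exact_mod_cast hkn

def wnaf (w : ℕ) (hw : 2 ≤ w) (n : ℤ) : List ℤ :=
  if h0 : n = 0 then []
  else if h2 : (2:ℤ) ∣ n then 0 :: wnaf w hw (n / 2)
  else n.bmod (2^w) :: wnaf w hw ((n - n.bmod (2^w)) / 2)
termination_by n.natAbs
decreasing_by
  · exact half_lt h0 h2
  · exact odd_lt w hw h2

lemma wnaf_zero (w : ℕ) (hw : 2 ≤ w) : wnaf w hw 0 = [] := by rw [wnaf]; simp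

lemma wnaf_even (w : ℕ) (hw : 2 ≤ w) {n : ℤ} (h0 : n ≠ 0) (h2 : (2:ℤ) ∣ n) :
    wnaf w hw n = 0 :: wnaf w hw (n / 2) := by
  rw [wnaf]; simp [h0, h2]

lemma wnaf_odd (w : ℕ) (hw : 2 ≤ w) {n : ℤ} (h2 : ¬ (2:ℤ) ∣ n) :
    wnaf w hw n = n.bmod (2^w) :: wnaf w hw ((n - n.bmod (2^w)) / 2) := by
  have h0 : n ≠ 0 := by rintro rfl; exact h2 ⟨0, by ring⟩
  rw [wnaf]; simp [h0, h2]

lemma wnaf_ne_nil (w : ℕ) (hw : 2 ≤ w) {n : ℤ} (h0 : n ≠ 0) : wnaf w hw n ≠ [] := by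
  by_cases h2 : (2:ℤ) ∣ n
  · rw [wnaf_even w hw h0 h2]; simp
  · rw [wnaf_odd w hw h2]; simp

lemma wnaf_value (w : ℕ) (hw : 2 ≤ w) (n : ℤ) : digitValue (wnaf w hw n) = n := by
  suffices H : ∀ N : ℕ, ∀ n : ℤ, n.natAbs < N → digitValue (wnaf w hw n) = n from
    H (n.natAbs + 1) n (Nat.lt_succ_self _)
  intro N
  induction N with
  | zero => omega
  | succ N ih =>
    intro n hn
    by_cases h0 : n = 0
    · subst h0; rw [wnaf_zero, digitValue_nil]
    by_cases h2 : (2:ℤ) ∣ n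
    · rw [wnaf_even w hw h0 h2, digitValue_cons,
        ih (n/2) (by have := half_lt h0 h2; omega)]
      rw [Int.mul_ediv_cancel' h2]; ring
    · obtain ⟨hodd, habs, hdvd⟩ := bmod_spec w hw n h2
      have hpw : (2:ℤ)^w = 2 * 2^(w-1) := by
        conv_lhs => rw [show w = (w-1)+1 by omega]
        ring
      have h2d : (2:ℤ) ∣ n - n.bmod (2^w) := dvd_trans ⟨2^(w-1), hpw⟩ hdvd
      rw [wnaf_odd w hw h2, digitValue_cons,
        ih _ (by have := odd_lt w hw h2; omega), Int.mul_ediv_cancel' h2d]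
      ring

lemma wnaf_zero_prefix (w : ℕ) (hw : 2 ≤ w) :
    ∀ (k : ℕ) (n : ℤ) (i : ℕ), (2:ℤ)^k ∣ n → i < k → (wnaf w hw n).getD i 0 = 0 := by
  intro k
  induction k with
  | zero => omega
  | succ k ih =>
    intro n i hdvd hi
    by_cases h0 : n = 0
    · subst h0; rw [wnaf_zero]; simp
    · have h2 : (2:ℤ) ∣ n := dvd_trans (dvd_pow_self 2 k.succ_ne_zero) hdvd
      rw [wnaf_even w hw h0 h2]
      cases i with
      | zero => simp
      | succ i =>
        rw [List.getD_cons_succ]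
        apply ih _ _ _ (by omega)
        obtain ⟨c, rfl⟩ := hdvd
        rw [pow_succ', mul_assoc, Int.mul_ediv_cancel_left _ two_ne_zero]
        exact ⟨c, rfl⟩

lemma wnaf_isWNAF (w : ℕ) (hw : 2 ≤ w) (n : ℤ) : IsWNAF w (wnaf w hw n) := by
  suffices H : ∀ N : ℕ, ∀ n : ℤ, n.natAbs < N → IsWNAF w (wnaf w hw n) from
    H (n.natAbs + 1) n (Nat.lt_succ_self _)
  intro N
  induction N with
  | zero => omega
  | succ N ih =>
    intro n hn
    by_cases h0 : n = 0
    · subst h0; rw [wnaf_zero]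
      exact ⟨by simp, fun i j h _ _ => by simp at h⟩
    by_cases h2 : (2:ℤ) ∣ n
    · rw [wnaf_even w hw h0 h2]
      exact IsWNAF.cons hw (ih (n/2) (by have := half_lt h0 h2; omega)) (Or.inl rfl)
    · obtain ⟨hodd, habs, hdvd⟩ := bmod_spec w hw n h2
      rw [wnaf_odd w hw h2]
      refine IsWNAF.cons hw (ih _ (by have := odd_lt w hw h2; omega))
        (Or.inr ⟨hodd, habs, fun i hi => ?_⟩)
      apply wnaf_zero_prefix w hw (w-1) _ i _ hi
      obtain ⟨c, hc⟩ := hdvd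
      have hpw : (2:ℤ)^w = 2 * 2^(w-1) := by
        conv_lhs => rw [show w = (w-1)+1 by omega]
        ring
      refine ⟨c, ?_⟩
      rw [hc, hpw, mul_assoc, Int.mul_ediv_cancel_left _ two_ne_zero]

lemma wnaf_last (w : ℕ) (hw : 2 ≤ w) (n : ℤ) (h0 : n ≠ 0) :
    (wnaf w hw n).getLast? ≠ some 0 := by
  suffices H : ∀ N : ℕ, ∀ n : ℤ, n.natAbs < N → n ≠ 0 → (wnaf w hw n).getLast? ≠ some 0 from
    H (n.natAbs + 1) n (Nat.lt_succ_self _) h0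
  intro N
  induction N with
  | zero => omega
  | succ N ih =>
    intro n hn h0
    by_cases h2 : (2:ℤ) ∣ n
    · rw [wnaf_even w hw h0 h2]
      have hhalf : n / 2 ≠ 0 := by
        obtain ⟨k, rfl⟩ := h2
        rw [Int.mul_ediv_cancel_left _ two_ne_zero]
        rintro rfl; simp at h0
      have hne := wnaf_ne_nil w hw hhalf
      cases htl : wnaf w hw (n/2) with
      | nil => exact absurd htl hne
      | cons x t =>
        rw [List.getLast?_cons_cons, ← htl]
        exact ih (n/2) (by have := half_lt h0 h2; omega) hhalf
    · obtain ⟨hodd, habs, hdvd⟩ := bmod_spec w hw n h2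
      rw [wnaf_odd w hw h2]
      set m := (n - n.bmod (2^w)) / 2 with hm
      by_cases hm0 : m = 0
      · rw [hm0, wnaf_zero]
        have : n.bmod (2^w) ≠ 0 := by
          rw [Int.odd_iff] at hodd; omega
        simp [this]
      · have hne := wnaf_ne_nil w hw hm0
        cases htl : wnaf w hw m with
        | nil => exact absurd htl hne
        | cons x t =>
          rw [List.getLast?_cons_cons, ← htl]
          exact ih m (by have := odd_lt w hw h2; omega) hm0

lemma digitValue_ne_zero : ∀ (l : List ℤ), l ≠ [] →
    (∀ d ∈ l, d = 0 ∨ Odd d) → l.getLast? ≠ some 0 → digitValue l ≠ 0 := by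
  intro l
  induction l with
  | nil => intro h; exact absurd rfl h
  | cons d t ih =>
    intro _ hdig hlast hval
    rw [digitValue_cons] at hval
    have hd : d = 0 := by
      rcases hdig d List.mem_cons_self with h0 | hodd
      · exact h0
      · rw [Int.odd_iff] at hodd; omega
    subst hd
    cases t with
    | nil => exact hlast (by simp)
    | cons x t' =>
      refine ih (by simp) (fun y hy => hdig y (List.mem_cons_of_mem _ hy))
        (by rwa [List.getLast?_cons_cons] at hlast) ?_
      omega

lemma eq_wnaf (w : ℕ) (hw : 2 ≤ w) :
    ∀ (N : ℕ) (l : List ℤ), l.length < N → IsWNAF w l → (l = [] ∨ l.getLast? ≠ some 0) →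
      l = wnaf w hw (digitValue l) := by
  intro N
  induction N with
  | zero => omega
  | succ N ih =>
    intro l hlen hnaf hlast
    cases l with
    | nil => rw [digitValue_nil, wnaf_zero]
    | cons d t =>
      have hlast' : (d :: t).getLast? ≠ some 0 := by
        rcases hlast with h | h
        · simp at h
        · exact h
      have htail : IsWNAF w t := hnaf.tail
      have hlt : t = [] ∨ t.getLast? ≠ some 0 := by
        cases t with
        | nil => exact Or.inl rfl
        | cons x t' => exact Or.inr (by rwa [List.getLast?_cons_cons] at hlast')
      have hrec := ih t (by simp at hlen ⊢; omega) htail hlt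
      rw [digitValue_cons]
      by_cases hd : d = 0
      · subst hd
        have htne : t ≠ [] := by rintro rfl; exact hlast' (by simp)
        have hvt : digitValue t ≠ 0 := by
          refine digitValue_ne_zero t htne (fun y hy => ?_) ?_
          · rcases htail.1 y hy with h | h
            · exact Or.inl h
            · exact Or.inr h.1
          · rcases hlt with h | h
            · exact absurd h htne
            · exact h
        have hn0 : (0 : ℤ) + 2 * digitValue t ≠ 0 := by omega
        rw [wnaf_even w hw hn0 ⟨digitValue t, by ring⟩]
        have : ((0 : ℤ) + 2 * digitValue t) / 2 = digitValue t := by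
          rw [zero_add, Int.mul_ediv_cancel_left _ two_ne_zero]
        rw [this, ← hrec]
      · have hdodd : Odd d := by
          rcases hnaf.1 d List.mem_cons_self with h | h
          · exact absurd h hd
          · exact h.1
        have hdabs : |d| < 2^(w-1) := by
          rcases hnaf.1 d List.mem_cons_self with h | h
          · exact absurd h hd
          · exact h.2
        set n := d + 2 * digitValue t with hn
        have hnodd : ¬ (2:ℤ) ∣ n := by
          rw [Int.odd_iff] at hdodd; omega
        have hzero : ∀ i < w - 1, t.getD i 0 = 0 := by
          intro i hi
          have := hnaf.2 0 (i+1) (by simpa using hd) (by omega) (by omega)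
          simpa using this
        have hdvt : (2:ℤ)^(w-1) ∣ digitValue t := pow_dvd_digitValue (w-1) t hzero
        obtain ⟨hob, hab, hvd⟩ := bmod_spec w hw n hnodd
        have hpw : (2:ℤ)^w = 2 * 2^(w-1) := by
          conv_lhs => rw [show w = (w-1)+1 by omega]
          ring
        have h1 : (2:ℤ)^w ∣ n - d := by
          obtain ⟨c, hc⟩ := hdvt
          exact ⟨c, by rw [hn, hc, hpw]; ring⟩
        have h2 : (2:ℤ)^w ∣ n.bmod (2^w) - d := by
          have : n.bmod (2^w) - d = (n - d) - (n - n.bmod (2^w)) := by ring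
          rw [this]
          exact dvd_sub h1 hvd
        have hbd : n.bmod (2^w) = d := by
          have hz : n.bmod (2^w) - d = 0 := Int.eq_zero_of_abs_lt_dvd h2 (by
            calc |n.bmod (2^w) - d| ≤ |n.bmod (2^w)| + |d| := by
                  rw [sub_eq_add_neg]; simpa using abs_add_le (n.bmod (2^w)) (-d)
              _ < 2^w := by omega)
          omega
        rw [wnaf_odd w hw hnodd, hbd]
        have : (n - d) / 2 = digitValue t := by
          rw [hn, show d + 2 * digitValue t - d = 2 * digitValue t by ring,
            Int.mul_ediv_cancel_left _ two_ne_zero]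
        rw [this, ← hrec]

/-- Existence and uniqueness (up to leading zeros, i.e. among expansions with
no trailing zero digit) of the width-`w` nonadjacent form. -/
theorem wNAF_exists_unique (w : ℕ) (hw : 2 ≤ w) (n : ℤ) :
    ∃! l : List ℤ, IsWNAF w l ∧ digitValue l = n ∧
      (l = [] ∨ l.getLast? ≠ some 0) := by
  refine ⟨wnaf w hw n, ⟨wnaf_isWNAF w hw n, wnaf_value w hw n, ?_⟩, ?_⟩
  · by_cases h0 : n = 0
    · exact Or.inl (by rw [h0, wnaf_zero])
    · exact Or.inr (wnaf_last w hw n h0)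
  · rintro y ⟨hy1, hy2, hy3⟩
    have := eq_wnaf w hw (y.length + 1) y (Nat.lt_succ_self _) hy1 hy3
    rwa [hy2] at this
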